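/- arXiv:0910.4758 — 3 statements merged into one kernel-verified Lean document; each statement's English description precedes it below -/
import Mathlib

section
/- Let F be an algebraically closed field, K a finite group, and H a normal subgroup of K such that the index [K : H] = p is a prime. Let V be a finite-dimensional irreducible F-representation of K. Then either the restriction V|_H is irreducible as an F-representation of H, or V|_H is isomorphic to a direct sum of p pairwise non-isomorphic irreducible F-representations of H. -/
open Module

/-- A representation is irreducible if its associated module over the group algebra is simple. -/
def Representation.IsIrreducible' {k G V : Type*} [CommRing k] [Monoid G]
    [AddCommGroup V] [Module k V] (ρ : Representation k G V) : Prop :=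
  IsSimpleModule (MonoidAlgebra k G) ρ.asModule

open MonoidAlgebra
set_option linter.unusedSectionVars false

section Aux
variable {F : Type} [Field F] {K : Type} [Group K] {V : Type} [AddCommGroup V] [Module F V]

noncomputable instance Representation.asModule.isScalarTower {G : Type} [Monoid G]
    (σ : Representation F G V) : IsScalarTower F (MonoidAlgebra F G) σ.asModule :=
  ⟨fun c b x => by
    show σ.asAlgebraHom (c • b) x = c • (σ.asAlgebraHom b x)
    rw [map_smul]; rfl⟩

variable (H : Subgroup K) [H.Normal] (ρ : Representation F K V)

local notation "B" => MonoidAlgebra F H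
local notation "NN" => Representation.asModule (ρ.comp H.subtype : Representation F H V)

/-- the action of `k : K` on the restricted module, as an `F`-linear endomorphism -/
def rhoN (k : K) : NN →ₗ[F] NN := ρ k

lemma rhoN_mul (k k' : K) (v : NN) : rhoN H ρ (k * k') v = rhoN H ρ k (rhoN H ρ k' v) := by
  show ρ (k * k') v = ρ k (ρ k' v)
  rw [map_mul]; rfl

lemma rhoN_one (v : NN) : rhoN H ρ 1 v = v := by
  show ρ 1 v = v
  rw [map_one]; rfl

lemma rhoN_inv_cancel (k : K) (v : NN) : rhoN H ρ k (rhoN H ρ k⁻¹ v) = v := by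
  rw [← rhoN_mul, mul_inv_cancel, rhoN_one]

lemma res_of_smul (h : H) (v : NN) :
    (MonoidAlgebra.of F H h) • v = rhoN H ρ (h : K) v := by
  show Representation.asAlgebraHom (ρ.comp H.subtype) (MonoidAlgebra.of F H h) v = _
  rw [Representation.asAlgebraHom_of]
  rfl

/-- conjugation algebra automorphism of the group algebra of H -/
noncomputable def cg (k : K) : MonoidAlgebra F H ≃ₐ[F] MonoidAlgebra F H :=
  MonoidAlgebra.domCongr F F (MulAut.conjNormal k : MulAut H)

lemma smul_rhoN (k : K) (b : B) (v : NN) :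
    b • (rhoN H ρ k v) = rhoN H ρ k ((cg H k⁻¹ b) • v) := by
  induction b using MonoidAlgebra.induction_on with
  | of h =>
      rw [res_of_smul]
      have h1 : cg H k⁻¹ (MonoidAlgebra.of F H h)
          = MonoidAlgebra.of F H (MulAut.conjNormal k⁻¹ h) := by
        simp [cg]
      rw [h1, res_of_smul, ← rhoN_mul, ← rhoN_mul]
      have h2 : ((MulAut.conjNormal k⁻¹ h : H) : K) = k⁻¹ * h * k := by
        rw [MulAut.conjNormal_apply]; group
      rw [h2]
      congr 1
      group
  | add f g hf hg => rw [add_smul, hf, hg, map_add, add_smul, map_add]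
  | smul r f hf =>
      have hcg : (cg H k⁻¹) (r • f) = r • (cg H k⁻¹) f :=
        (cg H k⁻¹).toLinearEquiv.map_smul r f
      calc (r • f) • rhoN H ρ k v = r • (f • rhoN H ρ k v) := smul_assoc r f _
      _ = r • rhoN H ρ k ((cg H k⁻¹ f) • v) := by rw [hf]
      _ = rhoN H ρ k (r • ((cg H k⁻¹ f) • v)) := ((rhoN H ρ k).map_smul r _).symm
      _ = rhoN H ρ k (((cg H k⁻¹) (r • f)) • v) := by rw [hcg, smul_assoc]

lemma rhoN_inv_cancel' (k : K) (v : NN) : rhoN H ρ k⁻¹ (rhoN H ρ k v) = v := by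
  rw [← rhoN_mul, inv_mul_cancel, rhoN_one]

lemma rhoN_inv_smul (k : K) (b : B) (w : NN) :
    rhoN H ρ k⁻¹ (b • w) = (cg H k⁻¹ b) • (rhoN H ρ k⁻¹ w) := by
  conv_lhs => rw [← rhoN_inv_cancel H ρ k w, smul_rhoN, rhoN_inv_cancel']

/-- the image of a submodule of the restriction under the action of `k : K` -/
def conjSub (k : K) (U : Submodule (MonoidAlgebra F H) NN) :
    Submodule (MonoidAlgebra F H) NN where
  carrier := rhoN H ρ k '' U
  add_mem' := by
    rintro _ _ ⟨x, hx, rfl⟩ ⟨y, hy, rfl⟩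
    exact ⟨x + y, U.add_mem hx hy, map_add _ _ _⟩
  zero_mem' := ⟨0, U.zero_mem, map_zero _⟩
  smul_mem' := by
    rintro b _ ⟨u, hu, rfl⟩
    rw [smul_rhoN]
    exact ⟨_, U.smul_mem _ hu, rfl⟩

lemma mem_conjSub {k : K} {U : Submodule (MonoidAlgebra F H) NN} {v : NN} :
    v ∈ conjSub H ρ k U ↔ rhoN H ρ k⁻¹ v ∈ U := by
  constructor
  · rintro ⟨u, hu, rfl⟩
    rwa [rhoN_inv_cancel']
  · intro h
    exact ⟨_, h, rhoN_inv_cancel H ρ k v⟩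

lemma conjSub_conjSub (k k' : K) (U : Submodule (MonoidAlgebra F H) NN) :
    conjSub H ρ k (conjSub H ρ k' U) = conjSub H ρ (k * k') U := by
  ext v
  rw [mem_conjSub, mem_conjSub, mem_conjSub, ← rhoN_mul, mul_inv_rev]

lemma conjSub_one (U : Submodule (MonoidAlgebra F H) NN) : conjSub H ρ 1 U = U := by
  ext v
  rw [mem_conjSub, inv_one, rhoN_one]

lemma conjSub_le_conjSub {U U' : Submodule (MonoidAlgebra F H) NN} (k : K) (h : U ≤ U') :
    conjSub H ρ k U ≤ conjSub H ρ k U' := by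
  intro v hv
  rw [mem_conjSub] at hv ⊢
  exact h hv

lemma conjSub_le_iff {U U' : Submodule (MonoidAlgebra F H) NN} (k : K) :
    conjSub H ρ k U ≤ conjSub H ρ k U' ↔ U ≤ U' := by
  refine ⟨fun h => ?_, conjSub_le_conjSub H ρ k⟩
  have := conjSub_le_conjSub H ρ k⁻¹ h
  rwa [conjSub_conjSub, inv_mul_cancel, conjSub_one, conjSub_conjSub, inv_mul_cancel,
    conjSub_one] at this

lemma conjSub_coe (h : H) (U : Submodule (MonoidAlgebra F H) NN) :
    conjSub H ρ (h : K) U = U := by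
  ext v
  rw [mem_conjSub]
  constructor
  · intro hv
    have : v = MonoidAlgebra.of F H h • (rhoN H ρ (h : K)⁻¹ v) := by
      rw [res_of_smul, rhoN_inv_cancel]
    rw [this]
    exact U.smul_mem _ hv
  · intro hv
    have : rhoN H ρ (h : K)⁻¹ v = MonoidAlgebra.of F H h⁻¹ • v := by
      rw [res_of_smul]
      norm_cast
    rw [this]
    exact U.smul_mem _ hv

lemma conjSub_bot (k : K) : conjSub H ρ k (⊥ : Submodule (MonoidAlgebra F H) NN) = ⊥ := by
  ext v
  rw [mem_conjSub, Submodule.mem_bot, Submodule.mem_bot]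
  constructor
  · intro h
    have := congrArg (rhoN H ρ k) h
    rwa [rhoN_inv_cancel, map_zero] at this
  · intro h
    rw [h, map_zero]

/-- conjugation as an order isomorphism on submodules of the restriction -/
def conjOrderIso (k : K) :
    Submodule (MonoidAlgebra F H) NN ≃o Submodule (MonoidAlgebra F H) NN where
  toFun := conjSub H ρ k
  invFun := conjSub H ρ k⁻¹
  left_inv U := by rw [conjSub_conjSub, inv_mul_cancel, conjSub_one]
  right_inv U := by rw [conjSub_conjSub, mul_inv_cancel, conjSub_one]
  map_rel_iff' := conjSub_le_iff H ρ _

lemma isAtom_conjSub_iff (k : K) (U : Submodule (MonoidAlgebra F H) NN) :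
    IsAtom (conjSub H ρ k U) ↔ IsAtom U :=
  OrderIso.isAtom_iff (conjOrderIso H ρ k) U

lemma conjSub_iSup {ι : Type} (k : K) (f : ι → Submodule (MonoidAlgebra F H) NN) :
    conjSub H ρ k (⨆ i, f i) = ⨆ i, conjSub H ρ k (f i) :=
  OrderIso.map_iSup (conjOrderIso H ρ k) f

/-- move an element of `U` into the conjugate submodule -/
def toConj (k : K) (U : Submodule (MonoidAlgebra F H) NN) (x : ↥U) : ↥(conjSub H ρ k U) :=
  ⟨rhoN H ρ k x.1, (mem_conjSub H ρ).2 (by rw [rhoN_inv_cancel']; exact x.2)⟩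

/-- move an element of the conjugate submodule back into `U` -/
def fromConj (k : K) (U : Submodule (MonoidAlgebra F H) NN) (x : ↥(conjSub H ρ k U)) : ↥U :=
  ⟨rhoN H ρ k⁻¹ x.1, (mem_conjSub H ρ).1 x.2⟩

lemma toConj_fromConj (k : K) (U : Submodule (MonoidAlgebra F H) NN)
    (x : ↥(conjSub H ρ k U)) : toConj H ρ k U (fromConj H ρ k U x) = x :=
  Subtype.ext (rhoN_inv_cancel H ρ k x.1)

lemma fromConj_toConj (k : K) (U : Submodule (MonoidAlgebra F H) NN) (x : ↥U) :
    fromConj H ρ k U (toConj H ρ k U x) = x :=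
  Subtype.ext (rhoN_inv_cancel' H ρ k x.1)

lemma fromConj_add (k : K) (U : Submodule (MonoidAlgebra F H) NN)
    (x y : ↥(conjSub H ρ k U)) :
    fromConj H ρ k U (x + y) = fromConj H ρ k U x + fromConj H ρ k U y :=
  Subtype.ext (by simp [fromConj, map_add])

lemma fromConj_smul (k : K) (U : Submodule (MonoidAlgebra F H) NN)
    (b : MonoidAlgebra F H) (x : ↥(conjSub H ρ k U)) :
    fromConj H ρ k U (b • x) = (cg H k⁻¹ b) • fromConj H ρ k U x :=
  Subtype.ext (by simp only [fromConj, Submodule.coe_smul]; exact rhoN_inv_smul H ρ k b x.1)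

lemma toConj_cg_smul (k : K) (U : Submodule (MonoidAlgebra F H) NN)
    (b : MonoidAlgebra F H) (x : ↥U) :
    toConj H ρ k U ((cg H k⁻¹ b) • x) = b • toConj H ρ k U x :=
  Subtype.ext (by simp only [toConj, Submodule.coe_smul]; exact (smul_rhoN H ρ k b x.1).symm)

/-- transfer a linear isomorphism to the conjugate submodules -/
noncomputable def conjIso (k : K) {U U' : Submodule (MonoidAlgebra F H) NN}
    (e : ↥U ≃ₗ[MonoidAlgebra F H] ↥U') :
    ↥(conjSub H ρ k U) ≃ₗ[MonoidAlgebra F H] ↥(conjSub H ρ k U') where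
  toFun x := toConj H ρ k U' (e (fromConj H ρ k U x))
  invFun x := toConj H ρ k U (e.symm (fromConj H ρ k U' x))
  map_add' x y := by
    rw [fromConj_add, map_add]
    exact Subtype.ext (map_add (rhoN H ρ k) _ _)
  map_smul' b x := by
    rw [fromConj_smul, map_smul, toConj_cg_smul]
    rfl
  left_inv x := by
    dsimp only
    rw [fromConj_toConj, LinearEquiv.symm_apply_apply, toConj_fromConj]
  right_inv x := by
    dsimp only
    rw [fromConj_toConj, LinearEquiv.apply_symm_apply, toConj_fromConj]

/-- push a linear map along conjugation -/
noncomputable def pushMap (k : K) (U : Submodule (MonoidAlgebra F H) NN)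
    (f : ↥U →ₗ[MonoidAlgebra F H] NN) :
    ↥(conjSub H ρ k U) →ₗ[MonoidAlgebra F H] NN where
  toFun x := rhoN H ρ k (f (fromConj H ρ k U x))
  map_add' x y := by rw [fromConj_add, map_add, map_add]
  map_smul' b x := by rw [fromConj_smul, map_smul, ← smul_rhoN]; rfl

lemma pushMap_apply (k : K) (U : Submodule (MonoidAlgebra F H) NN)
    (f : ↥U →ₗ[MonoidAlgebra F H] NN) (x : ↥(conjSub H ρ k U)) :
    pushMap H ρ k U f x = rhoN H ρ k (f (fromConj H ρ k U x)) := rfl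

lemma pushMap_add (k : K) (U : Submodule (MonoidAlgebra F H) NN)
    (f g : ↥U →ₗ[MonoidAlgebra F H] NN) :
    pushMap H ρ k U (f + g) = pushMap H ρ k U f + pushMap H ρ k U g := by
  apply LinearMap.ext; intro x
  rw [LinearMap.add_apply, pushMap_apply, pushMap_apply, pushMap_apply,
    LinearMap.add_apply, map_add]

lemma pushMap_smulF (k : K) (U : Submodule (MonoidAlgebra F H) NN) (r : F)
    (f : ↥U →ₗ[MonoidAlgebra F H] NN) :
    pushMap H ρ k U (r • f) = r • pushMap H ρ k U f := by
  apply LinearMap.ext; intro x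
  rw [LinearMap.smul_apply, pushMap_apply, pushMap_apply, LinearMap.smul_apply, map_smul]

lemma subgroup_eq_top_of_prime_index {H : Subgroup K} (hp : Nat.Prime H.index)
    {P : Subgroup K} (hHP : H ≤ P) {c : K} (hc : c ∉ H) (hcP : c ∈ P) : P = ⊤ := by
  have h1 := Subgroup.relIndex_mul_index hHP
  rcases hp.eq_one_or_self_of_dvd P.index (Dvd.intro_left _ h1) with h2 | h2
  · exact Subgroup.index_eq_one.mp h2
  · exfalso
    rw [h2] at h1
    have hne : H.index ≠ 0 := hp.ne_zero
    have h3 : H.relIndex P = 1 := by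
      refine Nat.eq_of_mul_eq_mul_right (Nat.pos_of_ne_zero hne) ?_
      rw [one_mul]; exact h1
    exact hc (Subgroup.relIndex_eq_one.mp h3 hcP)

lemma stable_eq_bot_or_top (hns : IsSimpleModule (MonoidAlgebra F K) ρ.asModule)
    (hp : Nat.Prime H.index) {c : K} (hc : c ∉ H)
    (U : Submodule (MonoidAlgebra F H) NN) (hU : conjSub H ρ c U = U) :
    U = ⊥ ∨ U = ⊤ := by
  classical
  let P : Subgroup K :=
    { carrier := {k | conjSub H ρ k U = U}
      one_mem' := conjSub_one H ρ U
      mul_mem' := fun {a b} ha hb => by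
        show conjSub H ρ (a * b) U = U
        rw [← conjSub_conjSub]
        show conjSub H ρ a (conjSub H ρ b U) = U
        rw [hb]; exact ha
      inv_mem' := fun {a} ha => by
        show conjSub H ρ a⁻¹ U = U
        conv_lhs => rw [← ha]
        rw [conjSub_conjSub, inv_mul_cancel, conjSub_one] }
  have hHP : H ≤ P := fun h hh => conjSub_coe H ρ ⟨h, hh⟩ U
  have hPtop : P = ⊤ := subgroup_eq_top_of_prime_index hp hHP hc hU
  have hall : ∀ k : K, conjSub H ρ k U = U := fun k => by
    have : k ∈ P := hPtop ▸ Subgroup.mem_top k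
    exact this
  let U' : Submodule (MonoidAlgebra F K) ρ.asModule :=
    { carrier := (U : Set (Representation.asModule (ρ.comp H.subtype : Representation F H V)))
      add_mem' := fun {a b} ha hb => U.add_mem ha hb
      zero_mem' := U.zero_mem
      smul_mem' := by
        intro a m hm
        show a • m ∈ (U : Set (Representation.asModule (ρ.comp H.subtype : Representation F H V)))
        induction a using MonoidAlgebra.induction_on with
        | of k =>
            have h1 : (MonoidAlgebra.of F K k) • m = rhoN H ρ k m := by
              show ρ.asAlgebraHom (MonoidAlgebra.of F K k) m = _
              rw [Representation.asAlgebraHom_of]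
              rfl
            rw [h1, ← hall k]
            exact ⟨m, hm, rfl⟩
        | add f g hf hg =>
            rw [add_smul]
            exact U.add_mem hf hg
        | smul r f hf =>
            rw [smul_assoc]
            exact U.smul_of_tower_mem r hf }
  haveI := hns
  rcases eq_bot_or_eq_top U' with h | h
  · left
    rw [Submodule.eq_bot_iff] at h ⊢
    exact fun x hx => h x hx
  · right
    rw [Submodule.eq_top_iff'] at h ⊢
    exact fun x => h x

lemma conjSub_eq_bot_iff {k : K} {U : Submodule (MonoidAlgebra F H) NN} :
    conjSub H ρ k U = ⊥ ↔ U = ⊥ := by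
  constructor
  · intro h
    have := congrArg (conjSub H ρ k⁻¹) h
    rwa [conjSub_conjSub, inv_mul_cancel, conjSub_one, conjSub_bot] at this
  · intro h; rw [h, conjSub_bot]

lemma isSimple_res_of_conj_iso [IsAlgClosed F] [FiniteDimensional F V]
    (hns : IsSimpleModule (MonoidAlgebra F K) ρ.asModule) (hp : Nat.Prime H.index)
    (W : Submodule (MonoidAlgebra F H) NN) (hW : IsAtom W) {c : K} (hc : c ∉ H)
    (e : ↥(conjSub H ρ c W) ≃ₗ[MonoidAlgebra F H] ↥W) :
    IsSimpleModule (MonoidAlgebra F H) NN := by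
  classical
  haveI : FiniteDimensional F NN := inferInstanceAs (FiniteDimensional F V)
  haveI : FiniteDimensional F ↥W := by
    refine FiniteDimensional.of_injective
      (LinearMap.restrictScalars F (W.subtype) :
        ↥W →ₗ[F] NN) ?_
    exact Subtype.coe_injective
  -- the space of B-linear maps from W to NN
  set X := (↥W →ₗ[MonoidAlgebra F H] NN) with hX
  haveI : FiniteDimensional F X := by
    refine FiniteDimensional.of_injective
      (LinearMap.restrictScalarsₗ F (MonoidAlgebra F H) ↥W NN F :
        X →ₗ[F] (↥W →ₗ[F] NN)) ?_
    exact LinearMap.restrictScalars_injective F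
  have hWne : ∃ w : ↥W, (w : NN) ≠ 0 := by
    obtain ⟨w, hw, hw0⟩ := Submodule.exists_mem_ne_zero_of_ne_bot hW.1
    exact ⟨⟨w, hw⟩, hw0⟩
  haveI : Nontrivial X := by
    obtain ⟨w, hw⟩ := hWne
    refine nontrivial_of_ne W.subtype 0 (fun h => hw ?_)
    have := congrArg (fun f : X => f w) h
    exact this
  -- the twisting operator
  set Θ : X →ₗ[F] X :=
    { toFun := fun f => (pushMap H ρ c W f).comp (e.symm : ↥W →ₗ[MonoidAlgebra F H] ↥(conjSub H ρ c W))
      map_add' := by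
        intro f g
        rw [pushMap_add, LinearMap.add_comp]
      map_smul' := by
        intro r f
        rw [pushMap_smulF, LinearMap.smul_comp, RingHom.id_apply] } with hΘ
  obtain ⟨μ, hμ⟩ := Module.End.exists_eigenvalue Θ
  obtain ⟨f₀, hf₀⟩ := hμ.exists_hasEigenvector
  have hf0ne : f₀ ≠ 0 := hf₀.right
  have happ : Θ f₀ = μ • f₀ := hf₀.apply_eq_smul
  -- range of Θ f₀ is the conjugate of range f₀
  have hr : conjSub H ρ c (LinearMap.range f₀) = LinearMap.range (Θ f₀) := by
    ext v
    rw [mem_conjSub]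
    constructor
    · rintro ⟨w, hw⟩
      refine ⟨e (toConj H ρ c W w), ?_⟩
      have h2 : (Θ f₀) (e (toConj H ρ c W w))
          = rhoN H ρ c (f₀ (fromConj H ρ c W (e.symm (e (toConj H ρ c W w))))) := by
        rw [hΘ]; rfl
      rw [h2, e.symm_apply_apply, fromConj_toConj, hw, rhoN_inv_cancel]
    · rintro ⟨y, rfl⟩
      refine ⟨fromConj H ρ c W (e.symm y), ?_⟩
      have h1 : (Θ f₀) y = rhoN H ρ c (f₀ (fromConj H ρ c W (e.symm y))) := by
        rw [hΘ]; rfl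
      rw [h1, rhoN_inv_cancel']
  have hmu : μ ≠ 0 := by
    intro h0
    rw [h0, zero_smul] at happ
    rw [happ, LinearMap.range_zero, conjSub_eq_bot_iff] at hr
    exact hf0ne (LinearMap.range_eq_bot.mp hr)
  have hsmulF : ∀ (r : F) (w : ↥W), f₀ (r • w) = r • f₀ w := by
    intro r w
    rw [← algebraMap_smul (MonoidAlgebra F H) r w, map_smul,
      algebraMap_smul]
  have hrange_smul : LinearMap.range (μ • f₀) = LinearMap.range f₀ := by
    ext v
    constructor
    · rintro ⟨w, rfl⟩
      refine ⟨μ • w, ?_⟩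
      rw [hsmulF μ w]
      rfl
    · rintro ⟨w, rfl⟩
      refine ⟨μ⁻¹ • w, ?_⟩
      show μ • f₀ (μ⁻¹ • w) = f₀ w
      rw [hsmulF, smul_smul, mul_inv_cancel₀ hmu, one_smul]
  have hstable : conjSub H ρ c (LinearMap.range f₀) = LinearMap.range f₀ := by
    rw [hr, happ, hrange_smul]
  rcases stable_eq_bot_or_top H ρ hns hp hc (LinearMap.range f₀) hstable with h | h
  · exact absurd (LinearMap.range_eq_bot.mp h) hf0ne
  · -- f₀ is bijective, so NN is simple
    haveI : IsSimpleModule (MonoidAlgebra F H) ↥W := isSimpleModule_iff_isAtom.mpr hW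
    have hker : LinearMap.ker f₀ = ⊥ := by
      rcases eq_bot_or_eq_top (LinearMap.ker f₀) with hk | hk
      · exact hk
      · exact absurd (LinearMap.ker_eq_top.mp hk) hf0ne
    have hbij : Function.Bijective f₀ :=
      ⟨LinearMap.ker_eq_bot.mp hker, LinearMap.range_eq_top.mp h⟩
    exact IsSimpleModule.congr (LinearEquiv.ofBijective f₀ hbij).symm

end Aux

section AtomIso

variable {R M : Type*} [Ring R] [AddCommGroup M] [Module R M]

lemma atom_le_finset_iSup_iso {ι : Type} [DecidableEq ι]
    (s : Finset ι) (Wf : ι → Submodule R M) (hW : ∀ i ∈ s, IsAtom (Wf i))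
    {S : Submodule R M} (hS : IsAtom S) (hle : S ≤ ⨆ i ∈ s, Wf i) :
    ∃ i ∈ s, Nonempty (↥S ≃ₗ[R] ↥(Wf i)) := by
  induction s using Finset.induction_on with
  | empty =>
      exfalso
      rw [show (⨆ i ∈ (∅ : Finset ι), Wf i) = ⊥ by simp] at hle
      exact hS.1 (le_bot_iff.mp hle)
  | @insert a s' ha ih =>
      rw [Finset.iSup_insert] at hle
      by_cases hS' : S ≤ ⨆ i ∈ s', Wf i
      · obtain ⟨i, his, hiso⟩ := ih (fun i hi => hW i (Finset.mem_insert_of_mem hi)) hS'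
        exact ⟨i, Finset.mem_insert_of_mem his, hiso⟩
      · set U' := ⨆ i ∈ s', Wf i with hU'
        have hWA : IsAtom (Wf a) := hW a (Finset.mem_insert_self a s')
        have hWAU : ¬ Wf a ≤ U' := by
          intro h
          exact hS' (le_trans hle (by rw [sup_eq_right.mpr h]))
        have hSU : S ⊓ U' = ⊥ := by
          refine hS.2 _ (lt_of_le_of_ne inf_le_left (fun h => hS' ?_))
          rw [← h]; exact inf_le_right
        have hWAU' : Wf a ⊓ U' = ⊥ := by
          refine hWA.2 _ (lt_of_le_of_ne inf_le_left (fun h => hWAU ?_))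
          rw [← h]; exact inf_le_right
        set q := U'.mkQ with hq
        set qS : ↥S →ₗ[R] M ⧸ U' := q.comp S.subtype with hqS
        set qA : ↥(Wf a) →ₗ[R] M ⧸ U' := q.comp (Wf a).subtype with hqA
        have kerS : LinearMap.ker qS = ⊥ := by
          rw [Submodule.eq_bot_iff]
          intro x hx
          have h0 : q (x : M) = 0 := hx
          rw [Submodule.mkQ_apply, Submodule.Quotient.mk_eq_zero] at h0
          have : (x : M) ∈ S ⊓ U' := ⟨x.2, h0⟩
          rw [hSU] at this
          exact Subtype.ext this
        have kerA : LinearMap.ker qA = ⊥ := by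
          rw [Submodule.eq_bot_iff]
          intro x hx
          have h0 : q (x : M) = 0 := hx
          rw [Submodule.mkQ_apply, Submodule.Quotient.mk_eq_zero] at h0
          have : (x : M) ∈ Wf a ⊓ U' := ⟨x.2, h0⟩
          rw [hWAU'] at this
          exact Subtype.ext this
        have hRle : LinearMap.range qS ≤ LinearMap.range qA := by
          rintro _ ⟨x, rfl⟩
          obtain ⟨y, hy, z, hz, hyz⟩ := Submodule.mem_sup.mp (hle x.2)
          refine ⟨⟨y, hy⟩, ?_⟩
          show q y = q (x : M)
          rw [← hyz, map_add]
          have : q z = 0 := by rw [Submodule.mkQ_apply, Submodule.Quotient.mk_eq_zero]; exact hz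
          rw [this, add_zero]
        have hRSne : LinearMap.range qS ≠ ⊥ := by
          intro h
          obtain ⟨x, hx, hx0⟩ := (Submodule.ne_bot_iff S).mp hS.1
          apply hx0
          have h1 := LinearMap.mem_range_self qS (⟨x, hx⟩ : ↥S)
          rw [h] at h1
          have h2 : qS ⟨x, hx⟩ = 0 := (Submodule.mem_bot _).mp h1
          have h3 : (⟨x, hx⟩ : ↥S) ∈ LinearMap.ker qS := h2
          rw [kerS, Submodule.mem_bot] at h3
          exact congrArg Subtype.val h3
        haveI hsimpA : IsSimpleModule R ↥(Wf a) := isSimpleModule_iff_isAtom.mpr hWA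
        haveI hsimpS : IsSimpleModule R ↥S := isSimpleModule_iff_isAtom.mpr hS
        have eS : ↥S ≃ₗ[R] ↥(LinearMap.range qS) :=
          LinearEquiv.ofInjective qS (LinearMap.ker_eq_bot.mp kerS)
        have eA : ↥(Wf a) ≃ₗ[R] ↥(LinearMap.range qA) :=
          LinearEquiv.ofInjective qA (LinearMap.ker_eq_bot.mp kerA)
        haveI : IsSimpleModule R ↥(LinearMap.range qA) := IsSimpleModule.congr eA.symm
        have hatomA : IsAtom (LinearMap.range qA) := isSimpleModule_iff_isAtom.mp ‹_›
        have hReq : LinearMap.range qS = LinearMap.range qA := by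
          rcases lt_or_eq_of_le hRle with h | h
          · exact absurd (hatomA.2 _ h) hRSne
          · exact h
        exact ⟨a, Finset.mem_insert_self a s',
          ⟨eS.trans ((LinearEquiv.ofEq _ _ hReq).trans eA.symm)⟩⟩

end AtomIso

/-- If `H ⊴ K` has prime index `p` and `V` is an irreducible `F`-representation of `K`, then
the restriction `V|_H` is either irreducible, or is the direct sum of `p` pairwise
non-isomorphic irreducible `F`-representations of `H`. -/
theorem restriction_irreducible_or_direct_sum_of_prime_index
    (F : Type) [Field F] [IsAlgClosed F] (K : Type) [Group K] [Fintype K]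
    (H : Subgroup K) [H.Normal] (p : ℕ) (hp : p.Prime) (hindex : H.index = p)
    (V : Type) [AddCommGroup V] [Module F V] [FiniteDimensional F V]
    (ρ : Representation F K V) (hρ : ρ.IsIrreducible') :
    Representation.IsIrreducible' (ρ.comp H.subtype : Representation F H V) ∨
    ∃ (W : Fin p → Submodule (MonoidAlgebra F H)
        (Representation.asModule (ρ.comp H.subtype : Representation F H V))),
      DirectSum.IsInternal W ∧
      (∀ i, IsSimpleModule (MonoidAlgebra F H) (W i)) ∧
      (∀ i j, i ≠ j → IsEmpty ((W i) ≃ₗ[MonoidAlgebra F H] (W j))) := by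
  classical
  have hns : IsSimpleModule (MonoidAlgebra F K) ρ.asModule := hρ
  have hp' : Nat.Prime H.index := by rw [hindex]; exact hp
  haveI : Nontrivial (Representation.asModule (ρ.comp H.subtype : Representation F H V)) :=
    IsSimpleModule.nontrivial (MonoidAlgebra F K) ρ.asModule
  haveI : IsArtinian F (Representation.asModule (ρ.comp H.subtype : Representation F H V)) :=
    inferInstanceAs (IsArtinian F V)
  haveI : IsArtinian (MonoidAlgebra F H)
      (Representation.asModule (ρ.comp H.subtype : Representation F H V)) :=
    isArtinian_of_tower F inferInstance
  -- a simple submodule exists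
  obtain ⟨W₀, hW₀⟩ : ∃ W₀ : Submodule (MonoidAlgebra F H)
      (Representation.asModule (ρ.comp H.subtype : Representation F H V)), IsAtom W₀ := by
    rcases IsAtomic.eq_bot_or_exists_atom_le
      (⊤ : Submodule (MonoidAlgebra F H)
        (Representation.asModule (ρ.comp H.subtype : Representation F H V))) with h | ⟨a, ha, _⟩
    · exact absurd h.symm bot_ne_top
    · exact ⟨a, ha⟩
  -- an element outside H
  obtain ⟨g, hg⟩ : ∃ g : K, g ∉ H := by
    by_contra hall
    push_neg at hall
    have : H = ⊤ := Subgroup.eq_top_iff' H |>.mpr hall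
    rw [this, Subgroup.index_top] at hindex
    exact hp.ne_one hindex.symm
  by_cases hcase : ∃ c : K, c ∉ H ∧
      Nonempty (↥(conjSub H ρ c W₀) ≃ₗ[MonoidAlgebra F H] ↥W₀)
  · obtain ⟨c, hc, ⟨e⟩⟩ := hcase
    exact Or.inl (isSimple_res_of_conj_iso H ρ hns hp' W₀ hW₀ hc e)
  · push_neg at hcase
    right
    -- powers of g modulo H
    have hpow : ∀ m : ℕ, g ^ m ∈ H ↔ p ∣ m := by
      have hord : orderOf (QuotientGroup.mk g : K ⧸ H) = p := by
        have hdvd : orderOf (QuotientGroup.mk g : K ⧸ H) ∣ p := by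
          rw [← hindex]
          exact orderOf_dvd_natCard _
        rcases hp.eq_one_or_self_of_dvd _ hdvd with h | h
        · exfalso
          rw [orderOf_eq_one_iff] at h
          exact hg ((QuotientGroup.eq_one_iff g).mp h)
        · exact h
      intro m
      rw [← QuotientGroup.eq_one_iff, QuotientGroup.mk_pow, ← orderOf_dvd_iff_pow_eq_one, hord]
    set ψ : Fin p → Submodule (MonoidAlgebra F H)
        (Representation.asModule (ρ.comp H.subtype : Representation F H V)) :=
      fun i => conjSub H ρ (g ^ (i : ℕ)) W₀ with hψ
    have hatom : ∀ i, IsAtom (ψ i) := fun i => (isAtom_conjSub_iff H ρ _ W₀).mpr hW₀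
    -- pairwise non-isomorphic
    have haux : ∀ i j : Fin p, (i : ℕ) < (j : ℕ) →
        Nonempty (↥(ψ i) ≃ₗ[MonoidAlgebra F H] ↥(ψ j)) → False := by
      intro i j hij ⟨e⟩
      set d := (j : ℕ) - (i : ℕ) with hd
      have hdpos : 0 < d := Nat.sub_pos_of_lt hij
      have hdlt : d < p := lt_of_le_of_lt (Nat.sub_le _ _) j.2
      have hgd : g ^ d ∉ H := by
        rw [hpow]
        intro hdvd
        exact absurd (Nat.le_of_dvd hdpos hdvd) (not_le.mpr hdlt)
      have e2 := conjIso H ρ (g ^ (i : ℕ))⁻¹ e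
      have h1 : conjSub H ρ (g ^ (i : ℕ))⁻¹ (ψ i) = W₀ := by
        rw [hψ]
        rw [conjSub_conjSub, inv_mul_cancel, conjSub_one]
      have h2 : conjSub H ρ (g ^ (i : ℕ))⁻¹ (ψ j) = conjSub H ρ (g ^ d) W₀ := by
        rw [hψ]
        rw [conjSub_conjSub]
        have hj : (j : ℕ) = (i : ℕ) + d := by omega
        rw [hj, pow_add, inv_mul_cancel_left]
      rw [h1, h2] at e2
      exact (hcase (g ^ d) hgd).false e2.symm
    have hpair : ∀ i j : Fin p, i ≠ j → IsEmpty (↥(ψ i) ≃ₗ[MonoidAlgebra F H] ↥(ψ j)) := by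
      intro i j hij
      constructor
      intro e
      rcases lt_trichotomy (i : ℕ) (j : ℕ) with h | h | h
      · exact haux i j h ⟨e⟩
      · exact hij (Fin.ext h)
      · exact haux j i h ⟨e.symm⟩
    -- the supremum is everything
    have hW0 : ψ ⟨0, hp.pos⟩ = W₀ := by
      rw [hψ]
      dsimp only
      rw [pow_zero, conjSub_one]
    have hpsucc : ∀ i : Fin p, ∃ j : Fin p, conjSub H ρ (g ^ ((j : ℕ) + 1)) W₀ = ψ i := by
      intro i
      by_cases h0 : (i : ℕ) = 0
      · refine ⟨⟨p - 1, by have := hp.pos; omega⟩, ?_⟩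
        have hp1 : ((⟨p - 1, by have := hp.pos; omega⟩ : Fin p) : ℕ) + 1 = p := by
          have := hp.pos
          simp only []
          omega
        rw [hp1, hψ]
        dsimp only
        rw [h0, pow_zero, conjSub_one]
        exact conjSub_coe H ρ ⟨g ^ p, (hpow p).mpr dvd_rfl⟩ W₀
      · refine ⟨⟨(i : ℕ) - 1, by have := i.2; omega⟩, ?_⟩
        have h1 : ((⟨(i : ℕ) - 1, by have := i.2; omega⟩ : Fin p) : ℕ) + 1 = (i : ℕ) := by
          simp only []
          omega
        rw [h1]
    have hstab : conjSub H ρ g (⨆ i, ψ i) = ⨆ i, ψ i := by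
      rw [conjSub_iSup]
      apply le_antisymm
      · apply iSup_le; intro i
        by_cases h : (i : ℕ) + 1 < p
        · have heq : conjSub H ρ g (ψ i) = ψ ⟨(i : ℕ) + 1, h⟩ := by
            rw [hψ]
            dsimp only
            rw [conjSub_conjSub, ← pow_succ']
          rw [heq]
          exact le_iSup ψ _
        · have hip : (i : ℕ) + 1 = p := by have := i.2; omega
          have heq : conjSub H ρ g (ψ i) = W₀ := by
            rw [hψ]
            dsimp only
            rw [conjSub_conjSub, ← pow_succ', hip]
            exact conjSub_coe H ρ ⟨g ^ p, (hpow p).mpr dvd_rfl⟩ W₀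
          rw [heq, ← hW0]
          exact le_iSup ψ _
      · apply iSup_le; intro i
        obtain ⟨j, hj⟩ := hpsucc i
        rw [← hj]
        have heq : conjSub H ρ (g ^ ((j : ℕ) + 1)) W₀ = conjSub H ρ g (ψ j) := by
          rw [hψ]
          dsimp only
          rw [conjSub_conjSub, ← pow_succ']
        rw [heq]
        exact le_iSup (fun i => conjSub H ρ g (ψ i)) j
    have hsup : (⨆ i, ψ i) = ⊤ := by
      rcases stable_eq_bot_or_top H ρ hns hp' hg _ hstab with h | h
      · exfalso
        have h0 : ψ ⟨0, hp.pos⟩ ≤ ⊥ := h ▸ le_iSup ψ _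
        rw [hW0] at h0
        exact hW₀.1 (le_bot_iff.mp h0)
      · exact h
    have hindep : iSupIndep ψ := by
      intro i
      by_contra hnd
      have h1 : ψ i ⊓ (⨆ j ≠ i, ψ j) ≠ ⊥ := fun h => hnd (disjoint_iff.mpr h)
      have hle : ψ i ≤ ⨆ j ≠ i, ψ j := by
        rcases lt_or_eq_of_le (inf_le_left : ψ i ⊓ (⨆ j ≠ i, ψ j) ≤ ψ i) with hlt | heq
        · exact absurd ((hatom i).2 _ hlt) h1
        · rw [← heq]
          exact inf_le_right
      have hfin : (⨆ j ≠ i, ψ j) = ⨆ j ∈ Finset.univ.erase i, ψ j := by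
        simp only [Finset.mem_erase, Finset.mem_univ, and_true]
      obtain ⟨j, hjmem, ⟨e⟩⟩ := atom_le_finset_iSup_iso (Finset.univ.erase i) ψ
        (fun j _ => hatom j) (hatom i) (hfin ▸ hle)
      exact (hpair i j (Finset.ne_of_mem_erase hjmem).symm).false e
    refine ⟨ψ, DirectSum.isInternal_submodule_of_iSupIndep_of_iSup_eq_top hindep hsup,
      fun i => isSimpleModule_iff_isAtom.mpr (hatom i), hpair⟩
end

section
/- Let m ≥ 1, let q = 2^m, let F_q be the finite field with q elements, and let G = SL₂(F_q) be the group of 2×2 matrices over F_q of determinant 1. Suppose H is a subgroup of G that contains a Sylow 2-subgroup of G and whose order divides q(q−1). Then H is contained in a Borel subgroup of G, i.e., there exists g ∈ G such that g H g⁻¹ is contained in the subgroup of upper triangular matrices of SL₂(F_q). -/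
open Matrix Pointwise

def upperTriangularSL2 (F : Type*) [CommRing F] :
    Subgroup (Matrix.SpecialLinearGroup (Fin 2) F) where
  carrier := {A | (A : Matrix (Fin 2) (Fin 2) F) 1 0 = 0}
  one_mem' := by simp
  mul_mem' := by
    intro A B hA hB
    simp only [Set.mem_setOf_eq] at *
    show (A.1 * B.1) 1 0 = 0
    rw [Matrix.mul_apply, Fin.sum_univ_two, hA, hB]
    ring
  inv_mem' := by
    intro A hA
    simp only [Set.mem_setOf_eq] at *
    rw [Matrix.SpecialLinearGroup.SL2_inv_expl]
    simp [hA]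

variable {F : Type*} [Field F]

/-- elementary unipotent matrix -/
def uSL (a : F) : Matrix.SpecialLinearGroup (Fin 2) F :=
  ⟨!![1, a; 0, 1], by simp [Matrix.det_fin_two_of]⟩

lemma uSL_mul (a b : F) : uSL a * uSL b = uSL (a + b) := by
  ext i j
  show (!![(1:F), a; 0, 1] * !![1, b; 0, 1]) i j = _
  fin_cases i <;> fin_cases j <;>
    (simp [uSL, Matrix.mul_apply, Fin.sum_univ_two]; try ring)

lemma uSL_entries (a : F) (h : Matrix.SpecialLinearGroup (Fin 2) F) (b : F) :
    ((uSL a * h * uSL b : Matrix.SpecialLinearGroup (Fin 2) F) : Matrix (Fin 2) (Fin 2) F) =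
      !![h.1 0 0 + a * h.1 1 0, (h.1 0 0 + a * h.1 1 0) * b + (h.1 0 1 + a * h.1 1 1);
         h.1 1 0, h.1 1 0 * b + h.1 1 1] := by
  ext i j
  show (!![(1:F), a; 0, 1] * h.1 * !![1, b; 0, 1]) i j = _
  fin_cases i <;> fin_cases j <;>
    (simp [Matrix.mul_apply, Matrix.vecMul, dotProduct, Fin.sum_univ_two]; try ring)

lemma uSL_inj : Function.Injective (uSL (F := F)) := by
  intro a b hab
  have := congrArg (fun A : Matrix.SpecialLinearGroup (Fin 2) F => A.1 0 1) hab
  simpa [uSL] using this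

/-- the key counting lemma -/
lemma le_borel [Fintype F] (K : Subgroup (Matrix.SpecialLinearGroup (Fin 2) F))
    (hU : ∀ a : F, uSL a ∈ K)
    (hcard : Nat.card K ≤ Fintype.card F * (Fintype.card F - 1)) :
    K ≤ upperTriangularSL2 F := by
  intro h hh
  by_contra hc
  have hc : h.1 1 0 ≠ 0 := hc
  classical
  set c := h.1 1 0 with hcdef
  -- injection (F × F) ⊕ F → K
  let φ : (F × F) ⊕ F → K := fun x =>
    match x with
    | Sum.inl (a, b) => ⟨uSL a * h * uSL b, K.mul_mem (K.mul_mem (hU a) hh) (hU b)⟩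
    | Sum.inr a => ⟨uSL a, hU a⟩
  have hφ : Function.Injective φ := by
    rintro (⟨a, b⟩ | a) (⟨a', b'⟩ | a') hxy <;>
      simp only [φ, Subtype.mk.injEq] at hxy
    · have hM := congrArg (fun A : Matrix.SpecialLinearGroup (Fin 2) F =>
        (A : Matrix (Fin 2) (Fin 2) F)) hxy
      simp only [uSL_entries] at hM
      have h11 := congrFun (congrFun hM 1) 1
      have h00 := congrFun (congrFun hM 0) 0
      simp at h11 h00
      have hb : b = b' := h11.resolve_right hc
      have ha : a = a' := h00.resolve_right hc
      simp [ha, hb]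
    · exfalso
      have hM := congrArg (fun A : Matrix.SpecialLinearGroup (Fin 2) F =>
        (A : Matrix (Fin 2) (Fin 2) F)) hxy
      simp only [uSL_entries] at hM
      have := congrFun (congrFun hM 1) 0
      simp [uSL] at this
      exact hc this
    · exfalso
      have hM := congrArg (fun A : Matrix.SpecialLinearGroup (Fin 2) F =>
        (A : Matrix (Fin 2) (Fin 2) F)) hxy
      simp only [uSL_entries] at hM
      have := congrFun (congrFun hM 1) 0
      simp [uSL] at this
      exact hc this.symm
    · congr 1
      exact uSL_inj hxy
  have hle : Nat.card ((F × F) ⊕ F) ≤ Nat.card K :=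
    Nat.card_le_card_of_injective φ hφ
  have hq2 : 2 ≤ Fintype.card F := Fintype.one_lt_card
  set n := Fintype.card F
  have h1 : n * n + n ≤ n * (n - 1) := by
    calc n * n + n = Nat.card ((F × F) ⊕ F) := by
          simp [Nat.card_eq_fintype_card]; rfl
      _ ≤ Nat.card K := hle
      _ ≤ n * (n - 1) := hcard
  have h2 : n * (n - 1) ≤ n * n := Nat.mul_le_mul_left _ (Nat.sub_le n 1)
  omega

lemma uSL_zero : uSL (0 : F) = 1 := by
  ext i j
  fin_cases i <;> fin_cases j <;> simp [uSL]

/-- A subgroup of `SL₂(𝔽_q)`, `q = 2^m`, containing a Sylow `2`-subgroup and of order dividing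
`q(q-1)` is contained in a Borel subgroup, i.e. some conjugate of it consists of upper
triangular matrices. -/
theorem subgroup_of_SL2_char_two_conjugate_into_borel
    (m : ℕ) (hm : 1 ≤ m) (q : ℕ) (hq : q = 2 ^ m)
    (H : Subgroup (Matrix.SpecialLinearGroup (Fin 2) (GaloisField 2 m)))
    (hSyl : ∃ P : Sylow 2 (Matrix.SpecialLinearGroup (Fin 2) (GaloisField 2 m)),
      (P : Subgroup (Matrix.SpecialLinearGroup (Fin 2) (GaloisField 2 m))) ≤ H)
    (hord : Nat.card H ∣ q * (q - 1)) :
    ∃ g : Matrix.SpecialLinearGroup (Fin 2) (GaloisField 2 m),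
      ∀ h ∈ H, g * h * g⁻¹ ∈ upperTriangularSL2 (GaloisField 2 m) := by
  classical
  haveI : Fact (Nat.Prime 2) := ⟨Nat.prime_two⟩
  letI : Fintype (GaloisField 2 m) := Fintype.ofFinite _
  obtain ⟨P, hP⟩ := hSyl
  -- the unipotent subgroup
  let Uu : Subgroup (Matrix.SpecialLinearGroup (Fin 2) (GaloisField 2 m)) :=
    { carrier := Set.range (uSL (F := GaloisField 2 m))
      one_mem' := ⟨0, uSL_zero⟩
      mul_mem' := by rintro _ _ ⟨a, rfl⟩ ⟨b, rfl⟩; exact ⟨a + b, (uSL_mul a b).symm⟩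
      inv_mem' := by
        rintro _ ⟨a, rfl⟩
        exact ⟨-a, eq_inv_of_mul_eq_one_left (by rw [uSL_mul, neg_add_cancel, uSL_zero])⟩ }
  have hUp : IsPGroup 2 Uu := by
    intro x
    refine ⟨1, ?_⟩
    obtain ⟨a, ha⟩ := x.2
    have hx2 : (x : Matrix.SpecialLinearGroup (Fin 2) (GaloisField 2 m)) ^ 2 = 1 := by
      rw [← ha, pow_two, uSL_mul, CharTwo.add_self_eq_zero, uSL_zero]
    exact Subtype.ext (by simpa using hx2)
  obtain ⟨Q, hUQ⟩ := hUp.exists_le_sylow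
  obtain ⟨g, hg⟩ :=
    MulAction.exists_smul_eq (Matrix.SpecialLinearGroup (Fin 2) (GaloisField 2 m)) P Q
  refine ⟨g, ?_⟩
  set K := Subgroup.map (MulAut.conj g).toMonoidHom H with hK
  have hUK : ∀ a : GaloisField 2 m, uSL a ∈ K := by
    intro a
    have h1 : uSL a ∈ Q.toSubgroup := hUQ ⟨a, rfl⟩
    have h2 : Q.toSubgroup = MulAut.conj g • P.toSubgroup := by rw [← hg]; rfl
    rw [h2, Subgroup.mem_pointwise_smul_iff_inv_smul_mem] at h1
    refine ⟨(MulAut.conj g)⁻¹ • uSL a, hP h1, ?_⟩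
    simp [MulAut.smul_def]; group
  have hcardK : Nat.card K = Nat.card H :=
    (Nat.card_congr (Subgroup.equivMapOfInjective H (MulAut.conj g).toMonoidHom
      (MulAut.conj g).injective).toEquiv).symm
  have hqF : Fintype.card (GaloisField 2 m) = q := by
    rw [← Nat.card_eq_fintype_card, hq]
    exact GaloisField.card 2 m (by omega)
  have hq2 : 2 ≤ q := by
    rw [hq]
    calc 2 = 2 ^ 1 := rfl
      _ ≤ 2 ^ m := Nat.pow_le_pow_right (by norm_num) hm
  have hcard : Nat.card K ≤
      Fintype.card (GaloisField 2 m) * (Fintype.card (GaloisField 2 m) - 1) := by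
    rw [hcardK, hqF]
    exact Nat.le_of_dvd (Nat.mul_pos (by omega) (by omega)) hord
  have hborel := le_borel K hUK hcard
  intro h hh
  exact hborel ⟨h, hh, by simp⟩
end

section
/- The group PSL₂(F₂₅), the quotient of SL₂(F₂₅) by its center, has exactly one conjugacy class consisting of elements of order 3. -/
instance : Fact (Nat.Prime 5) := ⟨by norm_num⟩
open Matrix
abbrev F := GaloisField 5 2
abbrev SL2 := Matrix.SpecialLinearGroup (Fin 2) F

theorem exists_zeta : ∃ e : F, e^2 + e + 1 = 0 ∧ e^3 = 1 ∧ e ≠ 1 := by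
  classical
  haveI : Fintype F := Fintype.ofFinite F
  haveI : Fact (Nat.Prime 3) := ⟨by norm_num⟩
  have hcard : Fintype.card F = 25 := by
    have := GaloisField.card 5 2 (by norm_num)
    simpa [Nat.card_eq_fintype_card] using this
  have hcu : Fintype.card Fˣ = 24 := by
    rw [Fintype.card_units, hcard]
  obtain ⟨u, hu⟩ := exists_prime_orderOf_dvd_card 3 (by rw [hcu]; norm_num)
  have hu3 : (u:F)^3 = 1 := by
    have := pow_orderOf_eq_one u
    rw [hu] at this
    calc (u:F)^3 = ((u^3 : Fˣ) : F) := by push_cast; ring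
      _ = 1 := by rw [this]; rfl
  have hne : (u:F) ≠ 1 := by
    intro h
    have : u = 1 := Units.ext h
    rw [this, orderOf_one] at hu; norm_num at hu
  refine ⟨u, ?_, hu3, hne⟩
  have h3 : ((u:F) - 1) * ((u:F)^2 + (u:F) + 1) = 0 := by linear_combination hu3
  rcases mul_eq_zero.mp h3 with h | h
  · exact (hne (sub_eq_zero.mp h)).elim
  · exact h

theorem trace_eq (a : SL2) (ha3 : a^3 = 1) (ha1 : a ≠ 1) :
    a.1 0 0 + a.1 1 1 = -1 := by
  obtain ⟨h2, h3⟩ : (2:F) ≠ 0 ∧ (3:F) ≠ 0 := by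
    constructor <;>
    · intro h
      have := (CharP.cast_eq_zero_iff F 5 _).mp (by exact_mod_cast h)
      norm_num at this
  set p := a.1 0 0 with hp
  set q := a.1 0 1 with hq
  set r := a.1 1 0 with hr
  set s := a.1 1 1 with hs
  have hA : a.1 = !![p,q;r,s] := by
    rw [hp, hq, hr, hs]; exact Matrix.eta_fin_two a.1
  have hdet : p*s - q*r = 1 := by
    have := a.2
    rw [Matrix.det_fin_two] at this
    exact this
  have hcube : (!![p,q;r,s] : Matrix (Fin 2) (Fin 2) F)^3 = 1 := by
    rw [← hA]
    exact_mod_cast congrArg Subtype.val ha3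
  have e1 : p^3 + 2*(p*q*r) + q*r*s = 1 := by
    have := congrFun (congrFun hcube 0) 0
    simp [pow_succ, Matrix.mul_apply, Fin.sum_univ_two, Matrix.one_apply] at this
    linear_combination this
  have e2 : q*(p^2 + p*s + s^2 + q*r) = 0 := by
    have := congrFun (congrFun hcube 0) 1
    simp [pow_succ, Matrix.mul_apply, Fin.sum_univ_two, Matrix.one_apply] at this
    linear_combination this
  have e4 : s^3 + 2*(s*q*r) + p*q*r = 1 := by
    have := congrFun (congrFun hcube 1) 1
    simp [pow_succ, Matrix.mul_apply, Fin.sum_univ_two, Matrix.one_apply] at this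
    linear_combination this
  by_cases ht : (p+s)^2 = 1
  · have h2t : (2:F) * (p+s+1) = 0 := by
      linear_combination (-1:F)*e1 - e4 + (p+s)*ht - (3*(p+s))*hdet
    rcases mul_eq_zero.mp h2t with h | h
    · exact absurd h h2
    · linear_combination h
  · exfalso
    have hq0 : q = 0 := by
      have : q * ((p+s)^2 - 1) = 0 := by linear_combination e2 + q*hdet
      rcases mul_eq_zero.mp this with h | h
      · exact h
      · exact absurd (show ((p+s))^2 = 1 by linear_combination h) ht
    have hr0 : r = 0 := by
      have e3 : r*(p^2 + p*s + s^2 + q*r) = 0 := by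
        have := congrFun (congrFun hcube 1) 0
        simp [pow_succ, Matrix.mul_apply, Fin.sum_univ_two, Matrix.one_apply] at this
        linear_combination this
      have : r * ((p+s)^2 - 1) = 0 := by linear_combination e3 + r*hdet
      rcases mul_eq_zero.mp this with h | h
      · exact h
      · exact absurd (show ((p+s))^2 = 1 by linear_combination h) ht
    -- now a = diag(p,s), ps = 1, p^3 = 1
    have hps : p*s = 1 := by linear_combination hdet + s*hq0*0 + (by rw[hq0]; ring : q*r = 0)
    have hp3 : p^3 = 1 := by
      rw [hq0] at e1; linear_combination e1
    have hp1 : p = 1 := by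
      rcases mul_eq_zero.mp (show (p - 1)*(p^2+p+1) = 0 by linear_combination hp3) with h | h
      · linear_combination h
      · -- p^2+p+1 = 0, s = p^2, trace = -1, contradict ht
        exfalso
        apply ht
        have hs2 : s = p^2 := by linear_combination p^2*hps - s*hp3
        rw [hs2]
        linear_combination (p^2+p-1)*h
    apply ha1
    apply Subtype.ext
    rw [hA]
    have hs1 : s = 1 := by rw [hp1] at hps; linear_combination hps
    rw [hp1, hs1, hq0, hr0]
    ext i j
    fin_cases i <;> fin_cases j <;> simp [Matrix.one_apply]

theorem conj_lemma (e : F) (he : e^2 + e + 1 = 0) (D : SL2) (hD : D.1 = !![e,0;0,-1-e])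
    (a : SL2) (ha3 : a^3 = 1) (ha1 : a ≠ 1) :
    IsConj D a := by
  obtain ⟨h2, h3⟩ : (2:F) ≠ 0 ∧ (3:F) ≠ 0 := by
    constructor <;>
    · intro h
      have := (CharP.cast_eq_zero_iff F 5 _).mp (by exact_mod_cast h)
      norm_num at this
  have htr := trace_eq a ha3 ha1
  set p := a.1 0 0 with hp
  set q := a.1 0 1 with hq
  set r := a.1 1 0 with hr
  set s := a.1 1 1 with hsdef
  have hA : a.1 = !![p,q;r,s] := by
    rw [hp, hq, hr, hsdef]; exact Matrix.eta_fin_two a.1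
  have hdet : p*s - q*r = 1 := by
    have := a.2
    rw [Matrix.det_fin_two] at this
    exact this
  have hfe : (2*e+1 : F) ≠ 0 := by
    intro h
    apply h3
    linear_combination 4*he - (2*e+1)*h
  suffices key : ∃ m : Matrix (Fin 2) (Fin 2) F, m.det = 1 ∧ m * !![e,0;0,-1-e] = a.1 * m by
    obtain ⟨m, hm1, hm2⟩ := key
    rw [isConj_iff]
    refine ⟨(show SL2 from ⟨m, hm1⟩), ?_⟩
    rw [mul_inv_eq_iff_eq_mul]
    apply Subtype.ext
    rw [Matrix.SpecialLinearGroup.coe_mul, Matrix.SpecialLinearGroup.coe_mul, hD]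
    exact hm2
  by_cases hq0 : q = 0
  · have hps : p*s = 1 := by rw [hq0] at hdet; linear_combination hdet
    have hroot : (p - e)*(p - (-1-e)) = 0 := by linear_combination p*htr - hps - he
    obtain ⟨y, hy⟩ : ∃ y : F, y*(2*e+1) = r := ⟨r*(2*e+1)⁻¹, by field_simp⟩
    rcases mul_eq_zero.mp hroot with hpe | hpf
    · have hpe : p = e := by linear_combination hpe
      have hse : s = -1-e := by linear_combination htr - hpe
      refine ⟨!![1, 0; y, 1], ?_, ?_⟩
      · rw [Matrix.det_fin_two_of]; ring
      · rw [hA, hq0, hpe, hse]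
        ext i j
        fin_cases i <;> fin_cases j <;>
          simp [Matrix.mul_apply, Fin.sum_univ_two]
        linear_combination hy
    · have hpf : p = -1-e := by linear_combination hpf
      have hse : s = e := by linear_combination htr - hpf
      refine ⟨!![0, -1; 1, y], ?_, ?_⟩
      · rw [Matrix.det_fin_two_of]; ring
      · rw [hA, hq0, hpf, hse]
        ext i j
        fin_cases i <;> fin_cases j <;>
          simp [Matrix.mul_apply, Fin.sum_univ_two]
        linear_combination -hy
  · have hqf : q * (-1-2*e) ≠ 0 := by
      apply mul_ne_zero hq0
      intro h; apply hfe; linear_combination -h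
    obtain ⟨u, hu⟩ : ∃ u : F, u * (q*(-1-2*e)) = 1 := ⟨(q*(-1-2*e))⁻¹, inv_mul_cancel₀ hqf⟩
    refine ⟨!![q, q*u; e-p, (-1-e-p)*u], ?_, ?_⟩
    · rw [Matrix.det_fin_two_of]
      linear_combination hu
    · rw [hA]
      ext i j
      fin_cases i <;> fin_cases j <;>
        simp [Matrix.mul_apply, Fin.sum_univ_two]
      · ring
      · ring
      · linear_combination he - e*htr + hdet
      · linear_combination u*(he - (-1-e)*htr + hdet)

theorem center_char (b : SL2) : b ∈ Subgroup.center SL2 ↔ b = 1 ∨ b = -1 := by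
  rw [Matrix.SpecialLinearGroup.mem_center_iff]
  constructor
  · rintro ⟨t, ht, hsc⟩
    simp only [Fintype.card_fin] at ht
    rcases mul_eq_zero.mp (show (t-1)*(t+1) = 0 by linear_combination ht) with h | h
    · left
      apply Subtype.ext
      rw [← hsc, show t = 1 by linear_combination h]
      simp
    · right
      apply Subtype.ext
      rw [← hsc, show t = -1 by linear_combination h, Matrix.SpecialLinearGroup.coe_neg]
      ext i j
      simp [Matrix.scalar_apply, Matrix.diagonal, Matrix.one_apply, Matrix.neg_apply]
      split <;> simp
  · rintro (rfl | rfl)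
    · exact ⟨1, by norm_num, by simp⟩
    · refine ⟨-1, by norm_num, ?_⟩
      rw [Matrix.SpecialLinearGroup.coe_neg]
      ext i j
      simp [Matrix.scalar_apply, Matrix.diagonal, Matrix.one_apply, Matrix.neg_apply]
      split <;> simp

/-- `PSL₂(𝔽₂₅) = L₂(25)` has exactly one conjugacy class consisting of elements of order `3`:
there is an element of order `3`, and any two elements of order `3` are conjugate. -/
theorem PSL2_F25_unique_conjClass_orderOf_eq_three :
    (∃ x : Matrix.ProjectiveSpecialLinearGroup (Fin 2) (GaloisField 5 2), orderOf x = 3) ∧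
    ∀ x y : Matrix.ProjectiveSpecialLinearGroup (Fin 2) (GaloisField 5 2),
      orderOf x = 3 → orderOf y = 3 → IsConj x y := by
  haveI : Fact (Nat.Prime 3) := ⟨by norm_num⟩
  set π := QuotientGroup.mk' (Subgroup.center SL2) with hπ
  -- the canonical order-3 element
  have hgdet : (!![0,-1;1,-1] : Matrix (Fin 2) (Fin 2) F).det = 1 := by
    rw [Matrix.det_fin_two_of]; ring
  set g : SL2 := ⟨_, hgdet⟩ with hg
  have hg3 : g^3 = 1 := by
    apply Subtype.ext
    show (g.1)^3 = 1
    rw [hg]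
    ext i j
    fin_cases i <;> fin_cases j <;>
      simp [pow_succ, Matrix.mul_apply, Fin.sum_univ_two, Matrix.one_apply]
  have hπg : orderOf (π g) = 3 := by
    apply orderOf_eq_prime
    · rw [← map_pow, hg3, _root_.map_one]
    · intro h
      have := (QuotientGroup.eq_one_iff g).mp h
      rcases (center_char g).mp this with h1 | h1
      · have := congrArg (fun z => z.1 1 0) h1
        simp [hg, Matrix.one_apply] at this
      · have := congrArg (fun z => z.1 1 0) h1
        rw [hg] at this
        simp [Matrix.SpecialLinearGroup.coe_neg, Matrix.one_apply] at this
  constructor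
  · exact ⟨π g, hπg⟩
  · -- uniqueness
    obtain ⟨e, he, he3, hne⟩ := exists_zeta
    have hDdet : (!![e,0;0,-1-e] : Matrix (Fin 2) (Fin 2) F).det = 1 := by
      rw [Matrix.det_fin_two_of]; linear_combination -he
    set D : SL2 := ⟨_, hDdet⟩ with hDdef
    have key : ∀ x : Matrix.ProjectiveSpecialLinearGroup (Fin 2) (GaloisField 5 2),
        orderOf x = 3 → IsConj (π D) x := by
      intro x hx
      have hx1 : x ≠ 1 := by
        intro h; rw [h, orderOf_one] at hx; norm_num at hx
      obtain ⟨a, ha⟩ := QuotientGroup.mk'_surjective (Subgroup.center SL2) x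
      have hx3 : (π a)^3 = 1 := by
        rw [ha, ← hx]; exact pow_orderOf_eq_one x
      have hmem : a^3 ∈ Subgroup.center SL2 := by
        apply (QuotientGroup.eq_one_iff (a^3)).mp
        rw [← map_pow] at hx3
        exact hx3
      -- choose a lift b with b^3 = 1
      obtain ⟨b, hb3, hb⟩ : ∃ b : SL2, b^3 = 1 ∧ π b = x := by
        rcases (center_char _).mp hmem with h1 | h1
        · exact ⟨a, h1, ha⟩
        · refine ⟨-a, ?_, ?_⟩
          · rw [Odd.neg_pow ⟨1, by norm_num⟩, h1, neg_neg]
          · have hneg1 : π (-1 : SL2) = 1 :=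
              (QuotientGroup.eq_one_iff _).mpr ((center_char _).mpr (Or.inr rfl))
            rw [show -a = -1 * a by rw [neg_one_mul], _root_.map_mul, hneg1, one_mul, ha]
      have hb1 : b ≠ 1 := by
        intro h; rw [h, _root_.map_one] at hb; exact hx1 hb.symm
      have := conj_lemma e he D rfl b hb3 hb1
      have := π.map_isConj this
      rwa [hb] at this
    intro x y hx hy
    exact (key x hx).symm.trans (key y hy)
end
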